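/- For every real number x with 0 < |x| < π/2, one has (π²/(π² − 4x²))^(π²/12) ≤ (tan x)/x ≤ π²/(π² − 4x²). -/

import Mathlib

open Real Set

set_option maxHeartbeats 1000000


lemma nonneg_of_deriv (f f' : ℝ → ℝ) (hf : ∀ t, HasDerivAt f (f' t) t)
    (h0 : f 0 = 0) (hf' : ∀ t, 0 ≤ t → 0 ≤ f' t) {x : ℝ} (hx : 0 ≤ x) : 0 ≤ f x := by
  have hmono : MonotoneOn f (Set.Ici 0) := by
    apply monotoneOn_of_deriv_nonneg (convex_Ici 0)
    · exact fun t _ => (hf t).continuousAt.continuousWithinAt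
    · exact fun t _ => (hf t).differentiableAt.differentiableWithinAt
    · intro t ht
      rw [(hf t).deriv]
      exact hf' t (le_of_lt (by simpa using ht))
  calc (0:ℝ) = f 0 := h0.symm
  _ ≤ f x := hmono (Set.self_mem_Ici) hx hx

lemma sin_ge3 {t : ℝ} (ht : 0 ≤ t) : t - t^3/6 ≤ sin t := by
  have := nonneg_of_deriv (fun t => sin t - (t - t^3/6)) (fun t => cos t - (1 - t^2/2))
    (fun t => by
      have h1 := Real.hasDerivAt_sin t
      have h2 : HasDerivAt (fun t : ℝ => t - t^3/6) (1 - t^2/2) t := by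
        have := ((hasDerivAt_id t).sub (((hasDerivAt_pow 3 t)).div_const 6))
        exact this.congr_deriv (by ring)
      exact h1.sub h2)
    (by norm_num) (fun t _ => by nlinarith [Real.one_sub_sq_div_two_le_cos (x := t)]) ht
  linarith

lemma cos_le4 {t : ℝ} (ht : 0 ≤ t) : cos t ≤ 1 - t^2/2 + t^4/24 := by
  have := nonneg_of_deriv (fun t => (1 - t^2/2 + t^4/24) - cos t)
    (fun t => (-t + t^3/6) + sin t)
    (fun t => by
      have h1 := Real.hasDerivAt_cos t
      have h2 : HasDerivAt (fun t : ℝ => 1 - t^2/2 + t^4/24) (-t + t^3/6) t := by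
        have := (((hasDerivAt_const t (1:ℝ)).sub ((hasDerivAt_pow 2 t).div_const 2)).add
          ((hasDerivAt_pow 4 t).div_const 24))
        refine this.congr_deriv ?_; push_cast; ring
      refine (h2.sub h1).congr_deriv ?_; ring)
    (by norm_num) (fun t ht => by nlinarith [sin_ge3 ht]) ht
  linarith

lemma sin_le5 {t : ℝ} (ht : 0 ≤ t) : sin t ≤ t - t^3/6 + t^5/120 := by
  have := nonneg_of_deriv (fun t => (t - t^3/6 + t^5/120) - sin t)
    (fun t => (1 - t^2/2 + t^4/24) - cos t)
    (fun t => by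
      have h1 := Real.hasDerivAt_sin t
      have h2 : HasDerivAt (fun t : ℝ => t - t^3/6 + t^5/120) (1 - t^2/2 + t^4/24) t := by
        have := (((hasDerivAt_id t).sub ((hasDerivAt_pow 3 t).div_const 6)).add
          ((hasDerivAt_pow 5 t).div_const 120))
        refine this.congr_deriv ?_; push_cast; ring
      exact h2.sub h1)
    (by norm_num) (fun t ht => by nlinarith [cos_le4 ht]) ht
  linarith

lemma cos_ge6 {t : ℝ} (ht : 0 ≤ t) : 1 - t^2/2 + t^4/24 - t^6/720 ≤ cos t := by
  have := nonneg_of_deriv (fun t => cos t - (1 - t^2/2 + t^4/24 - t^6/720))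
    (fun t => (t - t^3/6 + t^5/120) - sin t)
    (fun t => by
      have h1 := Real.hasDerivAt_cos t
      have h2 : HasDerivAt (fun t : ℝ => 1 - t^2/2 + t^4/24 - t^6/720) (-t + t^3/6 - t^5/120) t := by
        have := ((((hasDerivAt_const t (1:ℝ)).sub ((hasDerivAt_pow 2 t).div_const 2)).add
          ((hasDerivAt_pow 4 t).div_const 24)).sub ((hasDerivAt_pow 6 t).div_const 720))
        refine this.congr_deriv ?_; push_cast; ring
      refine (h1.sub h2).congr_deriv ?_; ring)
    (by norm_num) (fun t ht => by nlinarith [sin_le5 ht]) ht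
  linarith

lemma sin_ge7 {t : ℝ} (ht : 0 ≤ t) : t - t^3/6 + t^5/120 - t^7/5040 ≤ sin t := by
  have := nonneg_of_deriv (fun t => sin t - (t - t^3/6 + t^5/120 - t^7/5040))
    (fun t => cos t - (1 - t^2/2 + t^4/24 - t^6/720))
    (fun t => by
      have h1 := Real.hasDerivAt_sin t
      have h2 : HasDerivAt (fun t : ℝ => t - t^3/6 + t^5/120 - t^7/5040)
          (1 - t^2/2 + t^4/24 - t^6/720) t := by
        have := ((((hasDerivAt_id t).sub ((hasDerivAt_pow 3 t).div_const 6)).add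
          ((hasDerivAt_pow 5 t).div_const 120)).sub ((hasDerivAt_pow 7 t).div_const 5040))
        refine this.congr_deriv ?_; push_cast; ring
      exact h1.sub h2)
    (by norm_num) (fun t ht => by nlinarith [cos_ge6 ht]) ht
  linarith

lemma cos_le8 {t : ℝ} (ht : 0 ≤ t) : cos t ≤ 1 - t^2/2 + t^4/24 - t^6/720 + t^8/40320 := by
  have := nonneg_of_deriv (fun t => (1 - t^2/2 + t^4/24 - t^6/720 + t^8/40320) - cos t)
    (fun t => sin t - (t - t^3/6 + t^5/120 - t^7/5040))
    (fun t => by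
      have h1 := Real.hasDerivAt_cos t
      have h2 : HasDerivAt (fun t : ℝ => 1 - t^2/2 + t^4/24 - t^6/720 + t^8/40320)
          (-t + t^3/6 - t^5/120 + t^7/5040) t := by
        have := (((((hasDerivAt_const t (1:ℝ)).sub ((hasDerivAt_pow 2 t).div_const 2)).add
          ((hasDerivAt_pow 4 t).div_const 24)).sub ((hasDerivAt_pow 6 t).div_const 720)).add
          ((hasDerivAt_pow 8 t).div_const 40320))
        refine this.congr_deriv ?_; push_cast; ring
      refine (h2.sub h1).congr_deriv ?_; ring)
    (by norm_num) (fun t ht => by nlinarith [sin_ge7 ht]) ht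
  linarith

lemma sin_le9 {t : ℝ} (ht : 0 ≤ t) : sin t ≤ t - t^3/6 + t^5/120 - t^7/5040 + t^9/362880 := by
  have := nonneg_of_deriv
    (fun t => (t - t^3/6 + t^5/120 - t^7/5040 + t^9/362880) - sin t)
    (fun t => (1 - t^2/2 + t^4/24 - t^6/720 + t^8/40320) - cos t)
    (fun t => by
      have h1 := Real.hasDerivAt_sin t
      have h2 : HasDerivAt (fun t : ℝ => t - t^3/6 + t^5/120 - t^7/5040 + t^9/362880)
          (1 - t^2/2 + t^4/24 - t^6/720 + t^8/40320) t := by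
        have := (((((hasDerivAt_id t).sub ((hasDerivAt_pow 3 t).div_const 6)).add
          ((hasDerivAt_pow 5 t).div_const 120)).sub ((hasDerivAt_pow 7 t).div_const 5040)).add
          ((hasDerivAt_pow 9 t).div_const 362880))
        refine this.congr_deriv ?_; push_cast; ring
      exact h2.sub h1)
    (by norm_num) (fun t ht => by nlinarith [cos_le8 ht]) ht
  linarith




lemma lemA {x : ℝ} (hx : 0 < x) (hx2 : x < π/2) :
    (π^2 - 4*x^2) * sin x ≤ π^2 * x * cos x := by
  have pl := pi_gt_d6
  have pu := pi_lt_d6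
  have hq1 : (9.8696002:ℝ) < π^2 := by nlinarith
  have hq2 : π^2 < (9.8696066:ℝ) := by nlinarith
  rcases le_or_gt x 1.5 with h | h
  · -- left piece
    have h1 := sin_le5 hx.le
    have h2 := cos_ge6 hx.le
    have hnn : 0 ≤ π^2 - 4*x^2 := by nlinarith
    have hu : 0 ≤ 2.25 - x^2 := by nlinarith
    have hE0 : 0 ≤ 9.8696066*x*(1 - x^2/2 + x^4/24 - x^6/720)
        - (9.8696066 - 4*x^2)*(x - x^3/6 + x^5/120) := by
      nlinarith [mul_nonneg (pow_nonneg hx.le 3) (sq_nonneg (2.25 - x^2)),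
        mul_nonneg (pow_nonneg hx.le 3) hu, pow_nonneg hx.le 3]
    have hDq : x*(1 - x^2/2 + x^4/24 - x^6/720) - (x - x^3/6 + x^5/120) ≤ 0 := by
      nlinarith [pow_nonneg hx.le 3, mul_nonneg (pow_nonneg hx.le 3) hu,
        mul_nonneg (pow_nonneg hx.le 5) hu]
    have key : (π^2 - 4*x^2) * (x - x^3/6 + x^5/120)
        ≤ π^2 * x * (1 - x^2/2 + x^4/24 - x^6/720) := by
      nlinarith [hE0, mul_nonneg (by linarith : (0:ℝ) ≤ 9.8696066 - π^2)
        (by linarith : (0:ℝ) ≤ (x - x^3/6 + x^5/120) - x*(1 - x^2/2 + x^4/24 - x^6/720))]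
    have e1 : (π^2 - 4*x^2) * sin x ≤ (π^2 - 4*x^2) * (x - x^3/6 + x^5/120) :=
      mul_le_mul_of_nonneg_left h1 hnn
    have e2 : π^2 * x * (1 - x^2/2 + x^4/24 - x^6/720) ≤ π^2 * x * cos x :=
      mul_le_mul_of_nonneg_left h2 (by positivity)
    linarith
  · -- right piece
    set s := π/2 - x with hs
    have hxs : x = π/2 - s := by rw [hs]; ring
    have hs0 : 0 < s := by rw [hs]; linarith
    have hsu : s ≤ 0.0708 := by rw [hs]; linarith
    have hcx : cos x = sin s := by rw [hs, ← Real.cos_pi_div_two_sub]; ring_nf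
    have hsx : sin x = cos s := by rw [hs, ← Real.sin_pi_div_two_sub]; ring_nf
    rw [hcx, hsx]
    have h1 := sin_ge3 hs0.le
    have h2 : cos s ≤ 1 := cos_le_one s
    have hss : s^2 ≤ 0.00502 := by nlinarith
    have hqx1 : (14.8:ℝ) ≤ π^2 * x := by
      nlinarith [mul_nonneg (by linarith : (0:ℝ) ≤ π^2 - 9.8696002)
        (by linarith : (0:ℝ) ≤ x - 1.5)]
    have h4 : π^2 - 4*x^2 = 4*s*(π - s) := by rw [hxs]; ring
    have hsp : 0 ≤ 4*s*(π - s) := by nlinarith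
    have e1 : (π^2 - 4*x^2) * cos s ≤ 4*s*(π-s) := by
      rw [h4]
      nlinarith [mul_le_mul_of_nonneg_left h2 hsp]
    have key : 4*(π - s) ≤ π^2 * x * (1 - s^2/6) := by
      nlinarith [mul_nonneg (by linarith : (0:ℝ) ≤ π^2*x - 14.8)
        (by nlinarith : (0:ℝ) ≤ 1 - s^2/6 - 0.999)]
    have e3 : 4*s*(π-s) ≤ π^2*x*(s - s^3/6) := by
      have hm := mul_le_mul_of_nonneg_left key hs0.le
      have r1 : s*(4*(π-s)) = 4*s*(π-s) := by ring
      have r2 : s*(π^2*x*(1-s^2/6)) = π^2*x*(s - s^3/6) := by ring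
      linarith
    have e2 : π^2*x*(s - s^3/6) ≤ π^2*x*sin s :=
      mul_le_mul_of_nonneg_left h1 (by positivity)
    exact le_trans e1 (le_trans e3 e2)

lemma lemB {t : ℝ} (ht : 0 < t) (ht2 : t < π) :
    π^2/6 * t^2 * sin t ≤ (t - sin t) * (π^2 - t^2) := by
  have pl := pi_gt_d6
  have pu := pi_lt_d6
  have hq1 : (9.8696002:ℝ) < π^2 := by nlinarith
  have hq2 : π^2 < (9.8696066:ℝ) := by nlinarith
  rcases le_or_gt t 2.2 with h | h
  · -- left piece
    have h1 := sin_le9 ht.le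
    have h2 := sin_le5 ht.le
    have hnn : 0 ≤ π^2 - t^2 := by nlinarith
    have hu : 0 ≤ 4.84 - t^2 := by nlinarith
    have hK0 : 0 ≤ (t^3/6 - t^5/120 + t^7/5040 - t^9/362880) * (9.8696002 - t^2)
        - 9.8696002/6 * t^2 * (t - t^3/6 + t^5/120) := by
      nlinarith [mul_nonneg (pow_nonneg ht.le 5) hu,
        mul_nonneg (pow_nonneg ht.le 7) hu,
        pow_nonneg ht.le 11, pow_nonneg ht.le 5]
    have hDq : 0 ≤ (t^3/6 - t^5/120 + t^7/5040 - t^9/362880)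
        - t^2 * (t - t^3/6 + t^5/120) / 6 := by
      nlinarith [mul_nonneg (pow_nonneg ht.le 5) hu,
        mul_nonneg (pow_nonneg ht.le 7) hu, pow_nonneg ht.le 5]
    have key : π^2/6 * t^2 * (t - t^3/6 + t^5/120)
        ≤ (t^3/6 - t^5/120 + t^7/5040 - t^9/362880) * (π^2 - t^2) := by
      nlinarith [hK0, mul_nonneg (by linarith : (0:ℝ) ≤ π^2 - 9.8696002) hDq]
    have e1 : (t^3/6 - t^5/120 + t^7/5040 - t^9/362880) * (π^2 - t^2)
        ≤ (t - sin t) * (π^2 - t^2) := by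
      apply mul_le_mul_of_nonneg_right _ hnn
      linarith
    have e2 : π^2/6 * t^2 * sin t ≤ π^2/6 * t^2 * (t - t^3/6 + t^5/120) :=
      mul_le_mul_of_nonneg_left h2 (by positivity)
    linarith
  · -- right piece
    have hq3l : (31.006257:ℝ) < π^3 := by nlinarith
    have hq3u : π^3 < (31.006287:ℝ) := by nlinarith
    have hq4l : (97.409009:ℝ) < π^4 := by nlinarith
    have hq4u : π^4 < (97.409134:ℝ) := by nlinarith
    set s := π - t with hs
    have hts : t = π - s := by rw [hs]; ring
    have hs0 : 0 < s := by rw [hs]; linarith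
    have hsu : s ≤ 0.9416 := by rw [hs]; linarith
    have hst : sin t = sin s := by rw [hs, Real.sin_pi_sub]
    rw [hst]
    have h1 := sin_le5 hs0.le
    have hnn : 0 ≤ π^2 - t^2 := by nlinarith
    -- polynomial bound with numeric coefficients
    have hDpoly : 0 ≤ 3.5043447 - 5.372546*s + 3.0608713*s^2 - 0.6753742*s^3
        - 0.0278016*s^4 - 0.0053745*s^6 := by
      nlinarith [sq_nonneg (s - 1.1211), mul_nonneg (sq_nonneg s) (by linarith : (0:ℝ) ≤ 0.9416 - s),
        mul_nonneg (mul_nonneg (sq_nonneg s) (sq_nonneg s)) (by linarith : (0:ℝ) ≤ 0.9416 - s),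
        mul_nonneg (mul_nonneg (pow_nonneg hs0.le 3) hs0.le) (by linarith : (0:ℝ) ≤ 0.9416 - s),
        sq_nonneg s, pow_nonneg hs0.le 4, pow_nonneg hs0.le 6]
    -- coefficient bounds
    have e0 : (3.5043447:ℝ) ≤ 2*π^2 - π^4/6 := by linarith
    have e1c : (-5.372546:ℝ) ≤ π^3/3 - 5*π := by linarith
    have e2c : (3.0608713:ℝ) ≤ 2 - π^2/6 + π^4/36 := by linarith
    have e3c : (-0.6753742:ℝ) ≤ π/3 - π^3/18 := by linarith
    have e4c : (-0.0278016:ℝ) ≤ π^2/36 - 1/6 - π^4/720 := by linarith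
    have e5c : (0:ℝ) ≤ π^3/360 - π/60 := by linarith
    have e6c : (-0.0053745:ℝ) ≤ 1/120 - π^2/720 := by linarith
    have m1 := mul_le_mul_of_nonneg_right e1c hs0.le
    have m2 := mul_le_mul_of_nonneg_right e2c (sq_nonneg s)
    have m3 := mul_le_mul_of_nonneg_right e3c (pow_nonneg hs0.le 3)
    have m4 := mul_le_mul_of_nonneg_right e4c (pow_nonneg hs0.le 4)
    have m5 := mul_le_mul_of_nonneg_right e5c (pow_nonneg hs0.le 5)
    have m6 := mul_le_mul_of_nonneg_right e6c (pow_nonneg hs0.le 6)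
    have hD : 0 ≤ (π - s - s*(1 - s^2/6 + s^4/120))*(2*π - s)
        - π^2/6*(π - s)^2*(1 - s^2/6 + s^4/120) := by
      have idD : (π - s - s*(1 - s^2/6 + s^4/120))*(2*π - s)
          - π^2/6*(π - s)^2*(1 - s^2/6 + s^4/120)
          = (2*π^2 - π^4/6) + (π^3/3 - 5*π)*s + (2 - π^2/6 + π^4/36)*s^2
            + (π/3 - π^3/18)*s^3 + (π^2/36 - 1/6 - π^4/720)*s^4
            + (π^3/360 - π/60)*s^5 + (1/120 - π^2/720)*s^6 := by ring
      rw [idD]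
      nlinarith [hDpoly, m1, m2, m3, m4, m5, m6]
    have key : π^2/6 * t^2 * (s - s^3/6 + s^5/120)
        ≤ (t - (s - s^3/6 + s^5/120)) * (π^2 - t^2) := by
      have idR : (t - (s - s^3/6 + s^5/120)) * (π^2 - t^2) - π^2/6 * t^2 * (s - s^3/6 + s^5/120)
          = s * ((π - s - s*(1 - s^2/6 + s^4/120))*(2*π - s)
            - π^2/6*(π - s)^2*(1 - s^2/6 + s^4/120)) := by rw [hts]; ring
      nlinarith [mul_nonneg hs0.le hD, idR.ge, idR.le]
    have f1 : (t - (s - s^3/6 + s^5/120)) * (π^2 - t^2) ≤ (t - sin s) * (π^2 - t^2) := by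
      apply mul_le_mul_of_nonneg_right _ hnn
      linarith
    have f2 : π^2/6 * t^2 * sin s ≤ π^2/6 * t^2 * (s - s^3/6 + s^5/120) :=
      mul_le_mul_of_nonneg_left h1 (by positivity)
    linarith




noncomputable def F : ℝ → ℝ := fun x =>
  Real.log (Real.tan x / x) - π^2/12 * Real.log (π^2 / (π^2 - 4*x^2))

lemma hasDerivF {x : ℝ} (hx : 0 < x) (hx2 : x < π/2) :
    HasDerivAt F ((x - sin x * cos x)/(x * (sin x * cos x))
      - π^2/12 * (8*x/(π^2 - 4*x^2))) x := by
  have hcos : 0 < cos x := Real.cos_pos_of_mem_Ioo ⟨by linarith, hx2⟩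
  have hsin : 0 < sin x := Real.sin_pos_of_pos_of_lt_pi hx (by linarith [pi_gt_three])
  have htan : 0 < Real.tan x := Real.tan_pos_of_pos_of_lt_pi_div_two hx hx2
  have hd : 0 < π^2 - 4*x^2 := by nlinarith [pi_gt_three]
  have h1 : HasDerivAt Real.tan (1 / cos x ^ 2) x := Real.hasDerivAt_tan hcos.ne'
  have hg : HasDerivAt (fun y => Real.tan y / y)
      ((1 / cos x ^ 2 * x - Real.tan x * 1) / x ^ 2) x := h1.div (hasDerivAt_id x) hx.ne'
  have hlog1 : HasDerivAt (fun y => Real.log (Real.tan y / y))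
      (((1 / cos x ^ 2 * x - Real.tan x * 1) / x ^ 2) / (Real.tan x / x)) x :=
    hg.log (by positivity)
  have hu : HasDerivAt (fun y : ℝ => π^2 - 4*y^2) (-(8*x)) x := by
    have := (hasDerivAt_const x (π^2)).sub (((hasDerivAt_pow 2 x)).const_mul 4)
    refine this.congr_deriv ?_; push_cast; ring
  have hh : HasDerivAt (fun y : ℝ => π^2 / (π^2 - 4*y^2))
      ((0 * (π^2 - 4*x^2) - π^2 * -(8*x)) / (π^2 - 4*x^2)^2) x :=
    (hasDerivAt_const x (π^2)).div hu hd.ne'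
  have hlog2 : HasDerivAt (fun y => Real.log (π^2 / (π^2 - 4*y^2)))
      (((0 * (π^2 - 4*x^2) - π^2 * -(8*x)) / (π^2 - 4*x^2)^2) / (π^2 / (π^2 - 4*x^2))) x :=
    hh.log (by positivity)
  have := hlog1.sub (hlog2.const_mul (π^2/12))
  refine this.congr_deriv ?_
  rw [Real.tan_eq_sin_div_cos]
  have hpi : π ≠ 0 := by positivity
  field_simp
  ring

lemma derivF_nonneg {x : ℝ} (hx : 0 < x) (hx2 : x < π/2) :
    0 ≤ (x - sin x * cos x)/(x * (sin x * cos x)) - π^2/12 * (8*x/(π^2 - 4*x^2)) := by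
  have hcos : 0 < cos x := Real.cos_pos_of_mem_Ioo ⟨by linarith, hx2⟩
  have hsin : 0 < sin x := Real.sin_pos_of_pos_of_lt_pi hx (by linarith [pi_gt_three])
  have hd : 0 < π^2 - 4*x^2 := by nlinarith [pi_gt_three]
  have hB := lemB (t := 2*x) (by linarith) (by linarith)
  have hs2 : sin (2*x) = 2 * sin x * cos x := Real.sin_two_mul x
  rw [sub_nonneg]
  have key : π^2/12 * (8*x/(π^2 - 4*x^2)) = (2*π^2/3*x)/(π^2 - 4*x^2) := by ring
  rw [key, div_le_div_iff₀ hd (by positivity)]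
  rw [hs2] at hB
  nlinarith [hB]

lemma F_nonneg {x : ℝ} (hx : 0 < x) (hx2 : x < π/2) : 0 ≤ F x := by
  have hmono : MonotoneOn F (Ioo 0 (π/2)) := by
    apply monotoneOn_of_deriv_nonneg (convex_Ioo 0 (π/2))
    · exact fun y hy => (hasDerivF hy.1 hy.2).continuousAt.continuousWithinAt
    · intro y hy
      rw [interior_Ioo] at hy
      exact (hasDerivF hy.1 hy.2).differentiableAt.differentiableWithinAt
    · intro y hy
      rw [interior_Ioo] at hy
      rw [(hasDerivF hy.1 hy.2).deriv]
      exact derivF_nonneg hy.1 hy.2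
  have hlim : Filter.Tendsto F (nhdsWithin 0 (Ioi 0)) (nhds 0) := by
    have t1 : Filter.Tendsto (fun y => Real.tan y / y) (nhdsWithin 0 (Ioi 0)) (nhds 1) := by
      have h0 : HasDerivAt Real.tan 1 0 := by
        have := Real.hasDerivAt_tan (x := 0) (by simp)
        simpa using this
      have h := hasDerivAt_iff_tendsto_slope.mp h0
      have heq : (slope Real.tan 0) = (fun y => Real.tan y / y) := by
        funext y; simp [slope_def_field, Real.tan_zero]
      rw [heq] at h
      exact h.mono_left (nhdsWithin_mono 0 (fun y hy => ne_of_gt hy))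
    have t2 : Filter.Tendsto (fun y => Real.log (Real.tan y / y)) (nhdsWithin 0 (Ioi 0))
        (nhds 0) := by
      have hc : ContinuousAt Real.log 1 := Real.continuousAt_log one_ne_zero
      have := hc.tendsto.comp t1
      simpa [Function.comp_def] using this
    have t3 : Filter.Tendsto (fun y : ℝ => Real.log (π^2 / (π^2 - 4*y^2)))
        (nhdsWithin 0 (Ioi 0)) (nhds 0) := by
      have hd : ((π:ℝ)^2 - 4*(0:ℝ)^2) ≠ 0 := by norm_num
      have h1 : ContinuousAt (fun y : ℝ => π^2 / (π^2 - 4*y^2)) 0 :=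
        ContinuousAt.div continuousAt_const (by fun_prop) hd
      have h2 : ContinuousAt (fun y : ℝ => Real.log (π^2 / (π^2 - 4*y^2))) 0 := by
        apply ContinuousAt.comp (g := Real.log) _ h1
        apply Real.continuousAt_log
        norm_num
      have h3 := (h2.tendsto.mono_left (nhdsWithin_le_nhds (s := Ioi 0)))
      have hv : Real.log (π^2 / (π^2 - 4*(0:ℝ)^2)) = 0 := by
        rw [show (π:ℝ)^2 - 4*(0:ℝ)^2 = π^2 by ring,
          div_self (ne_of_gt (by positivity : (0:ℝ) < π^2)), Real.log_one]
      rwa [hv] at h3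
    have := t2.sub (t3.const_mul (π^2/12))
    unfold F; simpa using this
  have hev : ∀ᶠ y in nhdsWithin 0 (Ioi 0), F y ≤ F x := by
    filter_upwards [Ioo_mem_nhdsGT_of_mem (by constructor <;> linarith : (0:ℝ) ∈ Ico 0 x)]
      with y hy
    exact hmono ⟨hy.1, lt_trans hy.2 hx2⟩ ⟨hx, hx2⟩ hy.2.le
  exact le_of_tendsto hlim hev

lemma mainpos {x : ℝ} (hx : 0 < x) (hx2 : x < π/2) :
    (π ^ 2 / (π ^ 2 - 4 * x ^ 2)) ^ (π ^ 2 / 12) ≤ Real.tan x / x ∧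
      Real.tan x / x ≤ π ^ 2 / (π ^ 2 - 4 * x ^ 2) := by
  have hcos : 0 < cos x := Real.cos_pos_of_mem_Ioo ⟨by linarith, hx2⟩
  have hsin : 0 < sin x := Real.sin_pos_of_pos_of_lt_pi hx (by linarith [pi_gt_three])
  have htan : 0 < Real.tan x := Real.tan_pos_of_pos_of_lt_pi_div_two hx hx2
  have hd : 0 < π^2 - 4*x^2 := by nlinarith [pi_gt_three]
  constructor
  · -- lower bound
    have hF := F_nonneg hx hx2
    have hb : 0 < π^2/(π^2 - 4*x^2) := by positivity
    have htx : 0 < Real.tan x / x := by positivity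
    have h1 : (π^2/(π^2 - 4*x^2)) ^ (π^2/12) = Real.exp (π^2/12 * Real.log (π^2/(π^2-4*x^2))) := by
      rw [Real.rpow_def_of_pos hb, mul_comm]
    have h2 : Real.tan x / x = Real.exp (Real.log (Real.tan x / x)) := (Real.exp_log htx).symm
    rw [show π ^ 2 / (π ^ 2 - 4 * x ^ 2) = π^2/(π^2 - 4*x^2) by norm_num] at *
    rw [h1, h2]
    apply Real.exp_le_exp.mpr
    have : F x = Real.log (Real.tan x / x) - π^2/12 * Real.log (π^2 / (π^2 - 4*x^2)) := rfl
    linarith [hF, this ▸ hF]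
  · -- upper bound
    have hA := lemA hx hx2
    rw [Real.tan_eq_sin_div_cos, div_div, div_le_div_iff₀ (by positivity) hd]
    nlinarith [hA]

theorem stmt_8 (x : ℝ) (h0 : 0 < |x|) (h1 : |x| < π / 2) :
    (π ^ 2 / (π ^ 2 - 4 * x ^ 2)) ^ (π ^ 2 / 12) ≤ Real.tan x / x ∧
      Real.tan x / x ≤ π ^ 2 / (π ^ 2 - 4 * x ^ 2) := by
  rcases lt_trichotomy x 0 with hneg | hzero | hpos
  · have hx : 0 < -x := by linarith
    have hx2 : -x < π/2 := by
      have := abs_lt.mp h1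
      linarith [this.1]
    have := mainpos hx hx2
    rw [Real.tan_neg, neg_div_neg_eq, neg_sq] at this
    exact this
  · exfalso; rw [hzero] at h0; simp at h0
  · have hx2 : x < π/2 := by
      have := abs_lt.mp h1
      linarith [this.2]
    exact mainpos hpos hx2
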